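/- Let u : D → ℝ be a C³ function on an open set D ⊂ ℂ satisfying the elliptic Liouville equation u_xx + u_yy = 2e^u (equivalently 4 u_{z z̄} = 2 e^u). Define ξ = u_{zz} - (1/2)(u_z)². Then ∂ξ/∂z̄ = 0 on D. -/

import Mathlib

/-- The Wirtinger derivative `∂W/∂z = (1/2)(∂_x - i ∂_y) W` of a complex
function. -/
noncomputable def wirtingerZ (W : ℂ → ℂ) (z : ℂ) : ℂ :=
  (1 / 2 : ℂ) * (fderiv ℝ W z 1 - Complex.I * fderiv ℝ W z Complex.I)

/-- The Wirtinger derivative `∂W/∂z̄ = (1/2)(∂_x + i ∂_y) W` of a complex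
function. -/
noncomputable def wirtingerZbar (W : ℂ → ℂ) (z : ℂ) : ℂ :=
  (1 / 2 : ℂ) * (fderiv ℝ W z 1 + Complex.I * fderiv ℝ W z Complex.I)

/-- The Wirtinger derivative `u_z = (1/2)(u_x - i u_y)` of a real-valued
function. -/
noncomputable def wirtingerZReal (u : ℂ → ℝ) (z : ℂ) : ℂ :=
  (1 / 2 : ℂ) * ((fderiv ℝ u z 1 : ℝ) - Complex.I * ((fderiv ℝ u z Complex.I : ℝ) : ℂ))

open Complex in
private lemma pd_symm {u : ℂ → ℝ} {z : ℂ} (hu : ContDiffAt ℝ 2 u z) (v e : ℂ) :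
    fderiv ℝ (fun w => fderiv ℝ u w v) z e = fderiv ℝ (fun w => fderiv ℝ u w e) z v := by
  have hd : DifferentiableAt ℝ (fderiv ℝ u) z :=
    (hu.fderiv_right (m := 1) (by norm_num)).differentiableAt (by norm_num)
  have h1 : ∀ (v e : ℂ), fderiv ℝ (fun w => fderiv ℝ u w v) z e
      = fderiv ℝ (fderiv ℝ u) z e v := by
    intro v e
    have h := (hd.hasFDerivAt.clm_apply (hasFDerivAt_const v z)).fderiv
    rw [h]
    simp
  rw [h1, h1, (hu.isSymmSndFDerivAt (by simp [minSmoothness_of_isRCLikeNormedField])).eq]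

private lemma pd_contDiffAt {u : ℂ → ℝ} {w : ℂ} {n m : WithTop ℕ∞}
    (hu : ContDiffAt ℝ n u w) (h : m + 1 ≤ n) (v : ℂ) :
    ContDiffAt ℝ m (fun x => fderiv ℝ u x v) w :=
  (hu.fderiv_right h).clm_apply contDiffAt_const

private lemma hasFDerivAt_ofReal_pd {f : ℂ → ℝ} {z : ℂ} (hf : DifferentiableAt ℝ f z) :
    HasFDerivAt (fun w => ((f w : ℝ) : ℂ)) (Complex.ofRealCLM.comp (fderiv ℝ f z)) z :=
  (Complex.ofRealCLM.hasFDerivAt.comp z hf.hasFDerivAt : _)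

private lemma hasFDerivAt_W {u : ℂ → ℝ} {z : ℂ} (hu : ContDiffAt ℝ 3 u z) :
    HasFDerivAt (wirtingerZReal u)
      ((1 / 2 : ℂ) • (Complex.ofRealCLM.comp (fderiv ℝ (fun x => fderiv ℝ u x 1) z)
        - Complex.I • Complex.ofRealCLM.comp (fderiv ℝ (fun x => fderiv ℝ u x Complex.I) z))) z := by
  have h1 : DifferentiableAt ℝ (fun x => fderiv ℝ u x 1) z :=
    (pd_contDiffAt (m := 2) hu (by norm_num) 1).differentiableAt (by norm_num)
  have h2 : DifferentiableAt ℝ (fun x => fderiv ℝ u x Complex.I) z :=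
    (pd_contDiffAt (m := 2) hu (by norm_num) Complex.I).differentiableAt (by norm_num)
  exact ((hasFDerivAt_ofReal_pd h1).sub
    ((hasFDerivAt_ofReal_pd h2).const_mul Complex.I)).const_mul ((1:ℂ)/2)

private lemma fderiv_W_apply {u : ℂ → ℝ} {z : ℂ} (hu : ContDiffAt ℝ 3 u z) (e : ℂ) :
    fderiv ℝ (wirtingerZReal u) z e
      = (1/2 : ℂ) * (((fderiv ℝ (fun x => fderiv ℝ u x 1) z e : ℝ) : ℂ)
          - Complex.I * ((fderiv ℝ (fun x => fderiv ℝ u x Complex.I) z e : ℝ) : ℂ)) := by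
  rw [(hasFDerivAt_W hu).fderiv]
  simp [smul_eq_mul]

/-- If `u` is a `C³` real solution of the elliptic Liouville equation
`u_xx + u_yy = 2 e^u` on an open set `D`, then `ξ = u_zz - (1/2) u_z²`
satisfies `∂ξ/∂z̄ = 0` on `D`. -/
theorem stmt10 (D : Set ℂ) (hD : IsOpen D) (u : ℂ → ℝ)
    (hu : ContDiffOn ℝ 3 u D)
    (hpde : ∀ z ∈ D,
      fderiv ℝ (fun w => fderiv ℝ u w 1) z 1 +
        fderiv ℝ (fun w => fderiv ℝ u w Complex.I) z Complex.I
        = 2 * Real.exp (u z)) :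
    let ξ : ℂ → ℂ := fun z =>
      wirtingerZ (wirtingerZReal u) z - (1 / 2 : ℂ) * (wirtingerZReal u z) ^ 2
    ∀ z ∈ D, wirtingerZbar ξ z = 0 := by
  intro ξ z hz
  have hu3 : ∀ w ∈ D, ContDiffAt ℝ 3 u w := fun w hw => hu.contDiffAt (hD.mem_nhds hw)
  have hf1 : ∀ w ∈ D, ContDiffAt ℝ 2 (fun x => fderiv ℝ u x 1) w :=
    fun w hw => pd_contDiffAt (hu3 w hw) (by norm_num) 1
  have hf2 : ∀ w ∈ D, ContDiffAt ℝ 2 (fun x => fderiv ℝ u x Complex.I) w :=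
    fun w hw => pd_contDiffAt (hu3 w hw) (by norm_num) Complex.I
  have hA : DifferentiableAt ℝ (fun x => fderiv ℝ (fun y => fderiv ℝ u y 1) x 1) z :=
    (pd_contDiffAt (m := 1) (hf1 z hz) (by norm_num) 1).differentiableAt one_ne_zero
  have hB : DifferentiableAt ℝ (fun x => fderiv ℝ (fun y => fderiv ℝ u y 1) x Complex.I) z :=
    (pd_contDiffAt (m := 1) (hf1 z hz) (by norm_num) Complex.I).differentiableAt one_ne_zero
  have hB2 : DifferentiableAt ℝ (fun x => fderiv ℝ (fun y => fderiv ℝ u y Complex.I) x 1) z :=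
    (pd_contDiffAt (m := 1) (hf2 z hz) (by norm_num) 1).differentiableAt one_ne_zero
  have hC : DifferentiableAt ℝ (fun x => fderiv ℝ (fun y => fderiv ℝ u y Complex.I) x Complex.I) z :=
    (pd_contDiffAt (m := 1) (hf2 z hz) (by norm_num) Complex.I).differentiableAt one_ne_zero
  -- derivative of the explicit representative of ξ
  have HW := hasFDerivAt_W (hu3 z hz)
  have Hφ := (((((hasFDerivAt_ofReal_pd hA).sub
      ((hasFDerivAt_ofReal_pd hB2).const_mul Complex.I)).const_mul ((1:ℂ)/2)).sub
      ((((hasFDerivAt_ofReal_pd hB).sub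
        ((hasFDerivAt_ofReal_pd hC).const_mul Complex.I)).const_mul ((1:ℂ)/2)).const_mul
        Complex.I)).const_mul ((1:ℂ)/2)).sub ((HW.mul HW).const_mul ((1:ℂ)/2))
  -- ξ agrees with the representative near z
  have Hξ : HasFDerivAt ξ _ z := Hφ.congr_of_eventuallyEq (by
    filter_upwards [hD.mem_nhds hz] with w hw
    show wirtingerZ (wirtingerZReal u) w - (1/2 : ℂ) * (wirtingerZReal u w) ^ 2 = _
    simp only [wirtingerZ]
    rw [fderiv_W_apply (hu3 w hw) 1, fderiv_W_apply (hu3 w hw) Complex.I]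
    simp only [Pi.sub_apply, Pi.mul_apply]
    ring)
  show wirtingerZbar ξ z = 0
  simp only [wirtingerZbar]
  rw [Hξ.fderiv]
  simp only [ContinuousLinearMap.smul_apply, ContinuousLinearMap.sub_apply,
    ContinuousLinearMap.add_apply, ContinuousLinearMap.comp_apply,
    ContinuousLinearMap.coe_smul', Pi.smul_apply, Complex.ofRealCLM_apply,
    smul_eq_mul]
  -- symmetry of mixed partials
  have h20 := pd_symm ((hu3 z hz).of_le (show (2:WithTop ℕ∞) ≤ 3 by norm_num)) Complex.I 1
  have hs1 := pd_symm (hf1 z hz) 1 Complex.I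
  have hbb : (fun x => fderiv ℝ (fun y => fderiv ℝ u y Complex.I) x 1)
      =ᶠ[nhds z] (fun x => fderiv ℝ (fun y => fderiv ℝ u y 1) x Complex.I) := by
    filter_upwards [hD.mem_nhds hz] with w hw
    exact pd_symm (u := u) ((hu3 w hw).of_le (show (2:WithTop ℕ∞) ≤ 3 by norm_num)) Complex.I 1
  have hDbb := hbb.fderiv_eq (𝕜 := ℝ)
  have hs2 := pd_symm (hf2 z hz) Complex.I 1
  rw [hDbb] at hs2
  -- differentiated PDE
  have hud := ((hu3 z hz).differentiableAt (by norm_num)).hasFDerivAt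
  have Hexp := hud.exp.const_mul (2:ℝ)
  have hpde_ev : (fun w => fderiv ℝ (fun y => fderiv ℝ u y 1) w 1
      + fderiv ℝ (fun y => fderiv ℝ u y Complex.I) w Complex.I)
      =ᶠ[nhds z] (fun w => 2 * Real.exp (u w)) := by
    filter_upwards [hD.mem_nhds hz] with w hw using hpde w hw
  have hsum := (hA.hasFDerivAt.add hC.hasFDerivAt).fderiv
  have hpdeD := hpde_ev.fderiv_eq (𝕜 := ℝ)
  have hpde3 : ∀ e : ℂ, fderiv ℝ (fun x => fderiv ℝ (fun y => fderiv ℝ u y 1) x 1) z e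
      + fderiv ℝ (fun x => fderiv ℝ (fun y => fderiv ℝ u y Complex.I) x Complex.I) z e
      = 2 * (Real.exp (u z) * fderiv ℝ u z e) := by
    intro e
    have heq := hsum.symm.trans (hpdeD.trans Hexp.fderiv)
    have h1 : (fderiv ℝ (fun x => fderiv ℝ (fun y => fderiv ℝ u y 1) x 1) z
        + fderiv ℝ (fun x => fderiv ℝ (fun y => fderiv ℝ u y Complex.I) x Complex.I) z) e
        = ((2:ℝ) • (Real.exp (u z) • fderiv ℝ u z)) e := by rw [heq]
    simpa [smul_smul, mul_assoc] using h1
  have R1 := hpde3 1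
  rw [hs2] at R1
  have R2 := hpde3 Complex.I
  rw [hs1] at R2
  have R3 := hpde z hz
  have e1 : fderiv ℝ (fun x => fderiv ℝ (fun y => fderiv ℝ u y 1) x Complex.I) z Complex.I
      = 2 * (Real.exp (u z) * fderiv ℝ u z 1)
        - fderiv ℝ (fun x => fderiv ℝ (fun y => fderiv ℝ u y 1) x 1) z 1 := by linarith
  have e2 : fderiv ℝ (fun x => fderiv ℝ (fun y => fderiv ℝ u y Complex.I) x Complex.I) z Complex.I
      = 2 * (Real.exp (u z) * fderiv ℝ u z Complex.I)
        - fderiv ℝ (fun x => fderiv ℝ (fun y => fderiv ℝ u y 1) x 1) z Complex.I := by linarith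
  have e3 : fderiv ℝ (fun y => fderiv ℝ u y Complex.I) z Complex.I
      = 2 * Real.exp (u z) - fderiv ℝ (fun y => fderiv ℝ u y 1) z 1 := by linarith
  simp only [wirtingerZReal]
  rw [hDbb, hs2, h20, e1, e2, e3, hs1]
  push_cast
  linear_combination ((1/8 : ℂ) * ((fderiv ℝ (fun x => fderiv ℝ (fun y => fderiv ℝ u y 1) x 1) z 1 : ℝ) : ℂ)
      - (1/8 : ℂ) * ((fderiv ℝ u z 1 : ℝ) : ℂ) * ((fderiv ℝ (fun y => fderiv ℝ u y 1) z 1 : ℝ) : ℂ)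
      - (1/8 : ℂ) * Complex.I * ((fderiv ℝ (fun x => fderiv ℝ (fun y => fderiv ℝ u y 1) x Complex.I) z 1 : ℝ) : ℂ)
      + (1/8 : ℂ) * Complex.I * ((fderiv ℝ u z Complex.I : ℝ) : ℂ) * ((fderiv ℝ (fun y => fderiv ℝ u y 1) z 1 : ℝ) : ℂ)) * Complex.I_sq
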